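/- Let N and J be positive integers, let V > 0, and let x₁,...,x_N be real numbers with x_n ∈ [0, V] for all n. Let a* be an N × J matrix with entries a*_{ni} ∈ [0,1], Σ_{i=1}^J a*_{ni} = 1 for every n, and Σ_{n=1}^N a*_{ni} > 0 for every i; set μ*_i := (Σ_n a*_{ni} x_n)/(Σ_n a*_{ni}). Let ε₁, ε₂, ε₃ > 0 and suppose 2J·exp(−2ε₁²N) + 2J·exp(−2ε₂²N/V²) + 2J·exp(−2ε₃²N/V⁴) < 1. Then there exists a function z : {1,...,N} → {1,...,J} such that, with a_{ni} := 1 if z(n) = i and a_{ni} := 0 otherwise, for every i ∈ {1,...,J}: |Σ_n a_{ni} − Σ_n a*_{ni}| ≤ ε₁·N, |Σ_n a_{ni} x_n − Σ_n a*_{ni} x_n| ≤ ε₂·N, and |Σ_n a_{ni}(x_n − μ*_i)² − Σ_n a*_{ni}(x_n − μ*_i)²| ≤ ε₃·N. -/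

import Mathlib

open Finset

set_option linter.unusedTactic false
set_option linter.unreachableTactic false

lemma core_hoeffding (p h : ℝ) (hp0 : 0 ≤ p) (hp1 : p ≤ 1) :
    1 - p + p * Real.exp h ≤ Real.exp (p * h + h ^ 2 / 8) := by
  have hD : ∀ t : ℝ, 0 < 1 - p + p * Real.exp t := by
    intro t
    rcases eq_or_lt_of_le hp1 with h1 | h1
    · simp [← h1]; positivity
    · have := mul_nonneg hp0 (Real.exp_pos t).le
      linarith
  set φ : ℝ → ℝ := fun t => p * t + t ^ 2 / 8 - Real.log (1 - p + p * Real.exp t) with hφdef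
  set g : ℝ → ℝ := fun t => p + t / 4 - p * Real.exp t / (1 - p + p * Real.exp t) with hgdef
  have hder : ∀ t : ℝ, HasDerivAt φ (g t) t := by
    intro t
    have hexp : HasDerivAt (fun t : ℝ => 1 - p + p * Real.exp t) (p * Real.exp t) t :=
      ((Real.hasDerivAt_exp t).const_mul p).const_add (1 - p)
    have hlog : HasDerivAt (fun t : ℝ => Real.log (1 - p + p * Real.exp t))
        (p * Real.exp t / (1 - p + p * Real.exp t)) t := hexp.log (hD t).ne'
    have h1 : HasDerivAt (fun t : ℝ => p * t + t ^ 2 / 8) (p + t / 4) t := by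
      have := ((hasDerivAt_pow 2 t).div_const 8).const_add 0
      have h2 : HasDerivAt (fun t : ℝ => p * t) p t := (hasDerivAt_id t).const_mul p |>.congr_deriv (by ring)
      have h3 : HasDerivAt (fun t : ℝ => t ^ 2 / 8) (t / 4) t := by
        have := (hasDerivAt_pow 2 t).div_const 8
        exact this.congr_deriv (by norm_num; ring)
      exact (h2.add h3)
    exact h1.sub hlog
  have hgder : ∀ t : ℝ, HasDerivAt g
      (1 / 4 - (p * Real.exp t * (1 - p + p * Real.exp t) - p * Real.exp t * (p * Real.exp t)) / (1 - p + p * Real.exp t) ^ 2) t := by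
    intro t
    have hexp : HasDerivAt (fun t : ℝ => 1 - p + p * Real.exp t) (p * Real.exp t) t :=
      ((Real.hasDerivAt_exp t).const_mul p).const_add (1 - p)
    have hnum : HasDerivAt (fun t : ℝ => p * Real.exp t) (p * Real.exp t) t :=
      (Real.hasDerivAt_exp t).const_mul p
    have hdiv := hnum.div hexp (hD t).ne'
    have h1 : HasDerivAt (fun t : ℝ => p + t / 4) (1 / 4) t := by
      have := ((hasDerivAt_id t).div_const 4).const_add p
      convert this using 1
      all_goals first | rfl | ring
    exact h1.sub hdiv
  have hg_nonneg : ∀ t : ℝ, 0 ≤ 1 / 4 - (p * Real.exp t * (1 - p + p * Real.exp t) - p * Real.exp t * (p * Real.exp t)) / (1 - p + p * Real.exp t) ^ 2 := by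
    intro t
    set u := p * Real.exp t with hu
    set v := 1 - p with hv
    have hDpos : 0 < v + u := by have := hD t; rw [hv, hu]; linarith
    have key : (u * (v + u) - u * u) / (v + u) ^ 2 ≤ 1 / 4 := by
      rw [div_le_iff₀ (by positivity)]
      nlinarith [sq_nonneg (u - v)]
    have : u * ((1 - p) + u) - u * u = u * (v + u) - u * u := by rw [hv]
    have harr : (p * Real.exp t * (1 - p + p * Real.exp t) - p * Real.exp t * (p * Real.exp t)) / (1 - p + p * Real.exp t) ^ 2
        = (u * (v + u) - u * u) / (v + u) ^ 2 := by rw [← hu, ← hv]; try ring_nf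
    rw [harr]; linarith
  have hgmono : Monotone g := by
    apply monotone_of_deriv_nonneg
    · exact fun t => (hgder t).differentiableAt
    · intro t
      rw [(hgder t).deriv]
      exact hg_nonneg t
  have hg0 : g 0 = 0 := by
    simp only [hgdef, Real.exp_zero, mul_one]
    have : 1 - p + p = 1 := by ring
    rw [this]
    simp
  have hφ0 : φ 0 = 0 := by
    simp only [hφdef, Real.exp_zero, mul_one, mul_zero]
    have : 1 - p + p = 1 := by ring
    rw [this]; simp
  have hφ_nonneg : ∀ t : ℝ, 0 ≤ φ t := by
    intro t
    rcases le_total 0 t with ht | ht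
    · have hmono : MonotoneOn φ (Set.Icc 0 t) := by
        apply monotoneOn_of_deriv_nonneg (convex_Icc 0 t)
        · exact (fun s _ => (hder s).differentiableAt.continuousAt.continuousWithinAt)
        · exact fun s hs => (hder s).differentiableAt.differentiableWithinAt
        · intro s hs
          rw [(hder s).deriv]
          calc (0:ℝ) = g 0 := hg0.symm
          _ ≤ g s := hgmono (by simp at hs; exact hs.1.le)
      have := hmono (Set.left_mem_Icc.2 ht) (Set.right_mem_Icc.2 ht) ht
      rwa [hφ0] at this
    · have hmono : AntitoneOn φ (Set.Icc t 0) := by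
        apply antitoneOn_of_deriv_nonpos (convex_Icc t 0)
        · exact (fun s _ => (hder s).differentiableAt.continuousAt.continuousWithinAt)
        · exact fun s hs => (hder s).differentiableAt.differentiableWithinAt
        · intro s hs
          rw [(hder s).deriv]
          calc g s ≤ g 0 := hgmono (by simp at hs; exact hs.2.le)
          _ = 0 := hg0
      have := hmono (Set.left_mem_Icc.2 ht) (Set.right_mem_Icc.2 ht) ht
      rwa [hφ0] at this
  have hlog : Real.log (1 - p + p * Real.exp h) ≤ p * h + h ^ 2 / 8 := by
    have := hφ_nonneg h
    simp only [hφdef] at this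
    linarith
  calc 1 - p + p * Real.exp h = Real.exp (Real.log (1 - p + p * Real.exp h)) := (Real.exp_log (hD h)).symm
  _ ≤ Real.exp (p * h + h ^ 2 / 8) := Real.exp_le_exp.2 hlog

lemma chernoff_tail (N J : ℕ) (aStar : Fin N → Fin J → ℝ)
    (haStar : ∀ n i, aStar n i ∈ Set.Icc (0 : ℝ) 1)
    (hrow : ∀ n, ∑ i, aStar n i = 1)
    (i : Fin J) (c : Fin N → ℝ) (R t s : ℝ) (ht : 0 ≤ t)
    (hc : ∀ n, (c n) ^ 2 ≤ R ^ 2) :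
    ∑ z ∈ univ.filter (fun z : Fin N → Fin J =>
        s ≤ (∑ n, if z n = i then c n else 0) - ∑ n, aStar n i * c n),
      (∏ n, aStar n (z n))
    ≤ Real.exp (-t * s + N * (t ^ 2 * R ^ 2 / 8)) := by
  set S : (Fin N → Fin J) → ℝ := fun z => ∑ n, if z n = i then c n else 0 with hS
  set μ : ℝ := ∑ n, aStar n i * c n with hμ
  have hw_nonneg : ∀ z : Fin N → Fin J, 0 ≤ ∏ n, aStar n (z n) :=
    fun z => Finset.prod_nonneg fun n _ => (haStar n (z n)).1
  have step1 : ∑ z ∈ univ.filter (fun z : Fin N → Fin J => s ≤ S z - μ), (∏ n, aStar n (z n))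
      ≤ ∑ z : Fin N → Fin J, (∏ n, aStar n (z n)) * Real.exp (t * (S z - μ - s)) := by
    rw [Finset.sum_filter]
    apply Finset.sum_le_sum
    intro z _
    by_cases hz : s ≤ S z - μ
    · simp only [hz, if_true]
      have h1 : (1:ℝ) ≤ Real.exp (t * (S z - μ - s)) := by
        rw [← Real.exp_zero]
        exact Real.exp_le_exp.2 (mul_nonneg ht (by linarith))
      nlinarith [hw_nonneg z]
    · simp only [hz, if_false]
      exact mul_nonneg (hw_nonneg z) (Real.exp_pos _).le
  have step2 : ∀ z : Fin N → Fin J,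
      (∏ n, aStar n (z n)) * Real.exp (t * (S z - μ - s))
      = Real.exp (-t * s) * ∏ n, (aStar n (z n) *
          Real.exp (t * ((if z n = i then c n else 0) - aStar n i * c n))) := by
    intro z
    rw [Finset.prod_mul_distrib, ← Real.exp_sum]
    have hsum : ∑ n, t * ((if z n = i then c n else 0) - aStar n i * c n) = t * (S z - μ) := by
      rw [hS, hμ]
      rw [← Finset.mul_sum, Finset.sum_sub_distrib]
    rw [hsum, show t * (S z - μ - s) = -t * s + t * (S z - μ) by ring, Real.exp_add]
    ring
  have step3 : ∑ z : Fin N → Fin J, ∏ n, (aStar n (z n) *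
        Real.exp (t * ((if z n = i then c n else 0) - aStar n i * c n)))
      = ∏ n, ∑ j, (aStar n j * Real.exp (t * ((if j = i then c n else 0) - aStar n i * c n))) := by
    rw [Finset.prod_univ_sum, Fintype.piFinset_univ]
  have factor : ∀ n, ∑ j, (aStar n j * Real.exp (t * ((if j = i then c n else 0) - aStar n i * c n)))
      ≤ Real.exp (t ^ 2 * R ^ 2 / 8) := by
    intro n
    set p := aStar n i with hp
    have hp0 := (haStar n i).1
    have hp1 : p ≤ 1 := by
      calc p ≤ ∑ j, aStar n j := Finset.single_le_sum (fun j _ => (haStar n j).1) (mem_univ i)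
      _ = 1 := hrow n
    have hsum : ∑ j, (aStar n j * Real.exp (t * ((if j = i then c n else 0) - p * c n)))
        = Real.exp (- (p * (t * c n))) * (1 - p + p * Real.exp (t * c n)) := by
      have key : ∀ j : Fin J, aStar n j * Real.exp (t * ((if j = i then c n else 0) - p * c n))
          = Real.exp (- (p * (t * c n))) * (aStar n j + (if j = i then aStar n j * (Real.exp (t * c n) - 1) else 0)) := by
        intro j
        by_cases hj : j = i
        · simp only [hj, if_true]
          rw [show t * (c n - p * c n) = - (p * (t * c n)) + t * c n by ring, Real.exp_add]
          ring
        · simp only [hj, if_false]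
          rw [show t * (0 - p * c n) = - (p * (t * c n)) by ring]
          ring
      rw [Finset.sum_congr rfl (fun j _ => key j), ← Finset.mul_sum]
      congr 1
      rw [Finset.sum_add_distrib, hrow n, Finset.sum_ite_eq' univ i]
      simp only [mem_univ, if_true]
      ring
    rw [hsum]
    calc Real.exp (- (p * (t * c n))) * (1 - p + p * Real.exp (t * c n))
        ≤ Real.exp (- (p * (t * c n))) * Real.exp (p * (t * c n) + (t * c n) ^ 2 / 8) := by
          exact mul_le_mul_of_nonneg_left (core_hoeffding p (t * c n) hp0 hp1) (Real.exp_pos _).le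
    _ = Real.exp ((t * c n) ^ 2 / 8) := by rw [← Real.exp_add]; ring_nf
    _ ≤ Real.exp (t ^ 2 * R ^ 2 / 8) := by
          apply Real.exp_le_exp.2
          have := hc n
          nlinarith [sq_nonneg t]
  have hfac_nonneg : ∀ n, (0:ℝ) ≤ ∑ j, (aStar n j * Real.exp (t * ((if j = i then c n else 0) - aStar n i * c n))) :=
    fun n => Finset.sum_nonneg fun j _ => mul_nonneg (haStar n j).1 (Real.exp_pos _).le
  calc ∑ z ∈ univ.filter (fun z : Fin N → Fin J => s ≤ S z - μ), (∏ n, aStar n (z n))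
      ≤ ∑ z : Fin N → Fin J, (∏ n, aStar n (z n)) * Real.exp (t * (S z - μ - s)) := step1
  _ = Real.exp (-t * s) * ∑ z : Fin N → Fin J, ∏ n, (aStar n (z n) *
        Real.exp (t * ((if z n = i then c n else 0) - aStar n i * c n))) := by
      rw [Finset.mul_sum]
      exact Finset.sum_congr rfl fun z _ => step2 z
  _ = Real.exp (-t * s) * ∏ n, ∑ j, (aStar n j * Real.exp (t * ((if j = i then c n else 0) - aStar n i * c n))) := by
      rw [step3]
  _ ≤ Real.exp (-t * s) * ∏ n : Fin N, Real.exp (t ^ 2 * R ^ 2 / 8) := by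
      apply mul_le_mul_of_nonneg_left _ (Real.exp_pos _).le
      exact Finset.prod_le_prod (fun n _ => hfac_nonneg n) (fun n _ => factor n)
  _ = Real.exp (-t * s + N * (t ^ 2 * R ^ 2 / 8)) := by
      rw [Finset.prod_const, card_univ, Fintype.card_fin, ← Real.exp_nat_mul, ← Real.exp_add]
      try norm_num

set_option maxHeartbeats 16000000 in
/-- Paper's Corollary 2 (probabilistic method): if the failure-probability
bound of Theorem 1 is less than one, then there exists an integer
(ε₁,ε₂,ε₃)-typical classification scheme `z`. -/
theorem exists_typical_scheme
    (N J : ℕ) (hN : 0 < N) (hJ : 0 < J) (V : ℝ) (hV : 0 < V)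
    (x : Fin N → ℝ) (hx : ∀ n, x n ∈ Set.Icc (0 : ℝ) V)
    (aStar : Fin N → Fin J → ℝ)
    (haStar : ∀ n i, aStar n i ∈ Set.Icc (0 : ℝ) 1)
    (hrow : ∀ n, ∑ i, aStar n i = 1)
    (hcol : ∀ i, 0 < ∑ n, aStar n i)
    (muStar : Fin J → ℝ)
    (hmuStar : ∀ i, muStar i = (∑ n, aStar n i * x n) / (∑ n, aStar n i))
    (ε₁ ε₂ ε₃ : ℝ) (hε₁ : 0 < ε₁) (hε₂ : 0 < ε₂) (hε₃ : 0 < ε₃)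
    (hlt : 2 * J * Real.exp (-2 * ε₁ ^ 2 * N)
            + 2 * J * Real.exp (-2 * ε₂ ^ 2 * N / V ^ 2)
            + 2 * J * Real.exp (-2 * ε₃ ^ 2 * N / V ^ 4) < 1) :
    ∃ z : Fin N → Fin J, ∀ i : Fin J,
      |(∑ n, (if z n = i then (1 : ℝ) else 0)) - ∑ n, aStar n i| ≤ ε₁ * N ∧
      |(∑ n, (if z n = i then (1 : ℝ) else 0) * x n)
          - ∑ n, aStar n i * x n| ≤ ε₂ * N ∧
      |(∑ n, (if z n = i then (1 : ℝ) else 0) * (x n - muStar i) ^ 2)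
          - ∑ n, aStar n i * (x n - muStar i) ^ 2| ≤ ε₃ * N := by
  classical
  -- weight function
  set w : (Fin N → Fin J) → ℝ := fun z => ∏ n, aStar n (z n) with hw
  have hw_nonneg : ∀ z, 0 ≤ w z := fun z => Finset.prod_nonneg fun n _ => (haStar n (z n)).1
  have hsum_w : ∑ z : Fin N → Fin J, w z = 1 := by
    rw [hw]
    rw [← Fintype.piFinset_univ, ← Finset.prod_univ_sum]
    simp [hrow]
  -- bounds on muStar
  have hmu_mem : ∀ i, 0 ≤ muStar i ∧ muStar i ≤ V := by
    intro i
    rw [hmuStar i]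
    constructor
    · apply div_nonneg _ (hcol i).le
      exact Finset.sum_nonneg fun n _ => mul_nonneg (haStar n i).1 (hx n).1
    · rw [div_le_iff₀ (hcol i)]
      rw [Finset.mul_sum]
      exact Finset.sum_le_sum fun n _ => by
        have := (hx n).2
        have := (haStar n i).1
        nlinarith
  set e1 : ℝ := Real.exp (-2 * ε₁ ^ 2 * N) with he1
  set e2 : ℝ := Real.exp (-2 * ε₂ ^ 2 * N / V ^ 2) with he2
  set e3 : ℝ := Real.exp (-2 * ε₃ ^ 2 * N / V ^ 4) with he3
  -- coefficient functions
  set c : Fin J → Fin 6 → Fin N → ℝ := fun i k n =>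
    match k with
    | 0 => 1 | 1 => -1 | 2 => x n | 3 => -x n
    | 4 => (x n - muStar i) ^ 2 | 5 => -(x n - muStar i) ^ 2 with hc
  set sv : Fin 6 → ℝ := ![ε₁ * N, ε₁ * N, ε₂ * N, ε₂ * N, ε₃ * N, ε₃ * N] with hsv
  set bound : Fin 6 → ℝ := ![e1, e1, e2, e2, e3, e3] with hbv
  set Q : Fin J × Fin 6 → (Fin N → Fin J) → Prop := fun p z =>
    sv p.2 ≤ (∑ n, if z n = p.1 then c p.1 p.2 n else 0) - ∑ n, aStar n p.1 * c p.1 p.2 n with hQ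
  -- each bad event has small weight
  have gen : ∀ (i : Fin J) (cc : Fin N → ℝ) (R t s : ℝ), 0 ≤ t → (∀ n, cc n ^ 2 ≤ R ^ 2) →
      ∀ (P : (Fin N → Fin J) → Prop) (_ : DecidablePred P),
      (∀ z, P z ↔ s ≤ (∑ n, if z n = i then cc n else 0) - ∑ n, aStar n i * cc n) →
      ∑ z ∈ univ.filter P, w z ≤ Real.exp (-t * s + N * (t ^ 2 * R ^ 2 / 8)) := by
    intro i cc R t s ht hcc P hdec hP
    have hfe : univ.filter P = univ.filter (fun z : Fin N → Fin J =>
        s ≤ (∑ n, if z n = i then cc n else 0) - ∑ n, aStar n i * cc n) := by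
      apply Finset.filter_congr
      intro z _
      exact hP z
    rw [hfe]
    exact chernoff_tail N J aStar haStar hrow i cc R t s ht hcc
  have hbound : ∀ p : Fin J × Fin 6,
      ∑ z ∈ univ.filter (Q p), w z ≤ bound p.2 := by
    rintro ⟨i, k⟩
    fin_cases k
    · refine le_trans (gen i (fun _ => 1) 1 (4 * ε₁) (ε₁ * N) (by positivity)
        (fun n => by norm_num) _ (by infer_instance) (fun z => Iff.rfl)) (le_of_eq ?_)
      show _ = e1
      rw [he1]; congr 1; ring
    · refine le_trans (gen i (fun _ => -1) 1 (4 * ε₁) (ε₁ * N) (by positivity)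
        (fun n => by norm_num) _ (by infer_instance) (fun z => Iff.rfl)) (le_of_eq ?_)
      show _ = e1
      rw [he1]; congr 1; ring
    · refine le_trans (gen i x V (4 * ε₂ / V ^ 2) (ε₂ * N) (by positivity)
        (fun n => by nlinarith [(hx n).1, (hx n).2]) _ (by infer_instance)
        (fun z => Iff.rfl)) (le_of_eq ?_)
      show _ = e2
      rw [he2]; congr 1; field_simp; ring
    · refine le_trans (gen i (fun n => -x n) V (4 * ε₂ / V ^ 2) (ε₂ * N) (by positivity)
        (fun n => by rw [neg_pow]; norm_num; nlinarith [(hx n).1, (hx n).2]) _ (by infer_instance)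
        (fun z => Iff.rfl)) (le_of_eq ?_)
      show _ = e2
      rw [he2]; congr 1; field_simp; ring
    · have hcc3 : ∀ n, ((x n - muStar i) ^ 2) ^ 2 ≤ (V ^ 2) ^ 2 := by
        intro n
        have h1 := (hx n).1
        have h2 := (hx n).2
        have h3 := (hmu_mem i).1
        have h4 := (hmu_mem i).2
        have hd : (x n - muStar i) ^ 2 ≤ V ^ 2 := by nlinarith
        nlinarith [sq_nonneg (x n - muStar i)]
      refine le_trans (gen i (fun n => (x n - muStar i) ^ 2) (V ^ 2) (4 * ε₃ / V ^ 4) (ε₃ * N)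
        (by positivity) hcc3 _ (by infer_instance) (fun z => Iff.rfl)) (le_of_eq ?_)
      show _ = e3
      rw [he3]; congr 1; field_simp; ring
    · have hcc3 : ∀ n, (-(x n - muStar i) ^ 2) ^ 2 ≤ (V ^ 2) ^ 2 := by
        intro n
        have h1 := (hx n).1
        have h2 := (hx n).2
        have h3 := (hmu_mem i).1
        have h4 := (hmu_mem i).2
        have hd : (x n - muStar i) ^ 2 ≤ V ^ 2 := by nlinarith
        nlinarith [sq_nonneg (x n - muStar i)]
      refine le_trans (gen i (fun n => -(x n - muStar i) ^ 2) (V ^ 2) (4 * ε₃ / V ^ 4) (ε₃ * N)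
        (by positivity) hcc3 _ (by infer_instance) (fun z => Iff.rfl)) (le_of_eq ?_)
      show _ = e3
      rw [he3]; congr 1; field_simp; ring
  -- covering: every non-good z is in some bad event
  have hcover : ∀ z : Fin N → Fin J, ¬ (∀ i : Fin J,
      |(∑ n, (if z n = i then (1 : ℝ) else 0)) - ∑ n, aStar n i| ≤ ε₁ * N ∧
      |(∑ n, (if z n = i then (1 : ℝ) else 0) * x n) - ∑ n, aStar n i * x n| ≤ ε₂ * N ∧
      |(∑ n, (if z n = i then (1 : ℝ) else 0) * (x n - muStar i) ^ 2)
          - ∑ n, aStar n i * (x n - muStar i) ^ 2| ≤ ε₃ * N) →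
      ∃ p : Fin J × Fin 6, Q p z := by
    intro z hbad
    simp only [not_forall] at hbad
    obtain ⟨i, hi⟩ := hbad
    have hA1 : ∀ (cc : Fin N → ℝ), ∑ n, (if z n = i then (1:ℝ) else 0) * cc n
        = ∑ n, if z n = i then cc n else 0 :=
      fun cc => Finset.sum_congr rfl fun n _ => by by_cases h : z n = i <;> simp [h]
    have hneg : ∀ (cc : Fin N → ℝ), (∑ n, if z n = i then (-cc n) else 0)
        = -∑ n, if z n = i then cc n else 0 := by
      intro cc
      rw [← Finset.sum_neg_distrib]
      exact Finset.sum_congr rfl fun n _ => by by_cases h : z n = i <;> simp [h]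
    rw [not_and_or, not_and_or] at hi
    rcases hi with hA | hB | hC
    · rw [not_le] at hA
      rcases lt_abs.1 hA with h | h
      · refine ⟨(i, 0), ?_⟩
        simp only [hQ, hsv, hc]
        norm_num [-Finset.sum_boole]
        linarith
      · refine ⟨(i, 1), ?_⟩
        simp only [hQ, hsv, hc]
        norm_num [-Finset.sum_boole, hneg (fun _ => (1:ℝ))]
        linarith
    · rw [not_le] at hB
      rw [hA1 x] at hB
      rcases lt_abs.1 hB with h | h
      · refine ⟨(i, 2), ?_⟩
        simp only [hQ, hsv, hc]
        rw [show (![ε₁ * (N:ℝ), ε₁ * N, ε₂ * N, ε₂ * N, ε₃ * N, ε₃ * N]) ((i, (2:Fin 6)).2) = ε₂ * N from rfl]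
        norm_num [-Finset.sum_boole]
        linarith
      · refine ⟨(i, 3), ?_⟩
        simp only [hQ, hsv, hc]
        rw [show (![ε₁ * (N:ℝ), ε₁ * N, ε₂ * N, ε₂ * N, ε₃ * N, ε₃ * N]) ((i, (3:Fin 6)).2) = ε₂ * N from rfl]
        norm_num [-Finset.sum_boole, hneg x]
        linarith
    · rw [not_le] at hC
      rw [hA1 (fun n => (x n - muStar i) ^ 2)] at hC
      rcases lt_abs.1 hC with h | h
      · refine ⟨(i, 4), ?_⟩
        simp only [hQ, hsv, hc]
        rw [show (![ε₁ * (N:ℝ), ε₁ * N, ε₂ * N, ε₂ * N, ε₃ * N, ε₃ * N]) ((i, (4:Fin 6)).2) = ε₃ * N from rfl]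
        norm_num [-Finset.sum_boole]
        linarith
      · refine ⟨(i, 5), ?_⟩
        simp only [hQ, hsv, hc]
        rw [show (![ε₁ * (N:ℝ), ε₁ * N, ε₂ * N, ε₂ * N, ε₃ * N, ε₃ * N]) ((i, (5:Fin 6)).2) = ε₃ * N from rfl]
        norm_num [-Finset.sum_boole, hneg (fun n => (x n - muStar i) ^ 2)]
        linarith
  -- total bound
  have htotal : ∑ p : Fin J × Fin 6, bound p.2
      = 2 * J * e1 + 2 * J * e2 + 2 * J * e3 := by
    rw [Fintype.sum_prod_type]
    have : ∀ i : Fin J, ∑ k : Fin 6, bound k = 2 * e1 + 2 * e2 + 2 * e3 := by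
      intro i
      rw [Fin.sum_univ_six]
      show e1 + e1 + e2 + e2 + e3 + e3 = _
      ring
    rw [Finset.sum_congr rfl (fun i _ => this i)]
    rw [Finset.sum_const, card_univ, Fintype.card_fin]
    push_cast
    ring
  by_contra hcon
  simp only [not_exists] at hcon
  have hmain : (1:ℝ) ≤ ∑ p : Fin J × Fin 6, bound p.2 := by
    calc (1:ℝ) = ∑ z : Fin N → Fin J, w z := hsum_w.symm
    _ ≤ ∑ z : Fin N → Fin J, ∑ p : Fin J × Fin 6, (if Q p z then w z else 0) := by
        apply Finset.sum_le_sum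
        intro z _
        obtain ⟨p₀, hp₀⟩ := hcover z (hcon z)
        calc w z = (if Q p₀ z then w z else 0) := by simp [hp₀]
        _ ≤ ∑ p : Fin J × Fin 6, (if Q p z then w z else 0) :=
          Finset.single_le_sum (f := fun p : Fin J × Fin 6 => if Q p z then w z else 0)
            (fun p _ => by by_cases hQp : Q p z <;> simp [hQp, hw_nonneg z]) (mem_univ p₀)
    _ = ∑ p : Fin J × Fin 6, ∑ z ∈ univ.filter (Q p), w z := by
        rw [Finset.sum_comm]
        exact Finset.sum_congr rfl fun p _ => (Finset.sum_filter _ _).symm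
    _ ≤ ∑ p : Fin J × Fin 6, bound p.2 := Finset.sum_le_sum fun p _ => hbound p
  rw [htotal] at hmain
  linarith
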